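/- Let q be a prime power, let 1 ≤ k ≤ n and r ≥ 1 be integers, let α_1, …, α_r be nonnegative real numbers, and let f : 𝔽_q^n → [0,∞). Then the uniform average over all k-dimensional 𝔽_q-linear subspaces C of 𝔽_q^n of the sum ∑ ∏_{i=1}^r f(c_i)^{α_i}, taken over all ordered r-tuples (c_1,…,c_r) of pairwise distinct nonzero elements of C, is at most ∑_{j=0}^{r−1} ((q^k − 1)/(q^n − 1))^{r−j} · ∑ ∏_{i=1}^r f(c_i)^{α_i}, where the inner sum is over all ordered r-tuples (c_1,…,c_r) of pairwise distinct nonzero vectors of 𝔽_q^n whose 𝔽_q-linear span has dimension r − j. -/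

import Mathlib

open scoped Classical
open Finset


lemma exists_auto {F V : Type} [Field F] [AddCommGroup V] [Module F V] [FiniteDimensional F V]
    (W₁ W₂ : Submodule F V) (h : Module.finrank F W₁ = Module.finrank F W₂) :
    ∃ g : V ≃ₗ[F] V, W₁.map (g : V →ₗ[F] V) = W₂ := by
  obtain ⟨U₁, hU₁⟩ := Submodule.exists_isCompl W₁
  obtain ⟨U₂, hU₂⟩ := Submodule.exists_isCompl W₂
  obtain ⟨eW⟩ : Nonempty (W₁ ≃ₗ[F] W₂) :=
    FiniteDimensional.nonempty_linearEquiv_of_finrank_eq h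
  obtain ⟨eU⟩ : Nonempty (U₁ ≃ₗ[F] U₂) := by
    apply FiniteDimensional.nonempty_linearEquiv_of_finrank_eq
    have h1 := Submodule.finrank_add_eq_of_isCompl hU₁
    have h2 := Submodule.finrank_add_eq_of_isCompl hU₂
    omega
  set g : V ≃ₗ[F] V :=
    (Submodule.prodEquivOfIsCompl W₁ U₁ hU₁).symm.trans
      ((eW.prodCongr eU).trans (Submodule.prodEquivOfIsCompl W₂ U₂ hU₂)) with hgdef
  have hgw : ∀ w : W₁, g (w : V) = (eW w : V) := by
    intro w
    simp [hgdef, Submodule.prodEquivOfIsCompl_symm_apply_left,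
      Submodule.coe_prodEquivOfIsCompl', LinearEquiv.prodCongr_apply]
  refine ⟨g, le_antisymm ?_ ?_⟩
  · rintro _ ⟨w, hw, rfl⟩
    have := hgw ⟨w, hw⟩
    simp only [Submodule.coe_subtype] at this
    rw [LinearEquiv.coe_coe, this]
    exact (eW ⟨w, hw⟩).2
  · intro v hv
    refine ⟨(eW.symm ⟨v, hv⟩ : V), (eW.symm ⟨v, hv⟩).2, ?_⟩
    rw [LinearEquiv.coe_coe, hgw (eW.symm ⟨v, hv⟩)]
    simp

lemma count_eq {F : Type} [Field F] [Fintype F] {n : ℕ} (k : ℕ)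
    (W₁ W₂ : Submodule F (Fin n → F)) (h : Module.finrank F W₁ = Module.finrank F W₂) :
    (Finset.univ.filter (fun C : Submodule F (Fin n → F) =>
        Module.finrank F C = k ∧ W₁ ≤ C)).card
      = (Finset.univ.filter (fun C : Submodule F (Fin n → F) =>
        Module.finrank F C = k ∧ W₂ ≤ C)).card := by
  obtain ⟨g, hg⟩ := exists_auto W₁ W₂ h
  apply Finset.card_bij (fun C _ => Submodule.map (g : (Fin n → F) →ₗ[F] _) C)
  · intro C hC
    simp only [mem_filter, mem_univ, true_and] at hC ⊢
    constructor
    · rw [LinearEquiv.finrank_map_eq]; exact hC.1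
    · rw [← hg]; exact Submodule.map_mono hC.2
  · intro C₁ h₁ C₂ h₂ heq
    exact Submodule.map_injective_of_injective g.injective heq
  · intro C' hC'
    simp only [mem_filter, mem_univ, true_and] at hC'
    refine ⟨Submodule.map (g.symm : (Fin n → F) →ₗ[F] _) C', ?_, ?_⟩
    · simp only [mem_filter, mem_univ, true_and]
      constructor
      · rw [LinearEquiv.finrank_map_eq]; exact hC'.1
      · have : W₁ = Submodule.map (g.symm : (Fin n → F) →ₗ[F] _) W₂ := by
          rw [← hg]
          ext x
          constructor
          · intro hx
            exact ⟨g x, ⟨x, hx, rfl⟩, by simp⟩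
          · rintro ⟨_, ⟨y, hy, rfl⟩, rfl⟩
            simpa using hy
        rw [this]; exact Submodule.map_mono hC'.2
    · ext x
      constructor
      · rintro ⟨_, ⟨y, hy, rfl⟩, rfl⟩
        simpa using hy
      · intro hx
        exact ⟨g.symm x, ⟨x, hx, rfl⟩, by simp⟩

lemma finrank_sup_span_singleton {F V : Type} [Field F] [AddCommGroup V] [Module F V]
    [FiniteDimensional F V] (W : Submodule F V) (x : V) (hx : x ∉ W) :
    Module.finrank F (W ⊔ Submodule.span F {x} : Submodule F V)
      = Module.finrank F W + 1 := by
  have hinf : W ⊓ Submodule.span F {x} = ⊥ := by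
    rw [eq_bot_iff]
    rintro v ⟨hv, hv'⟩
    obtain ⟨c, rfl⟩ := Submodule.mem_span_singleton.mp hv'
    rcases eq_or_ne c 0 with rfl | hc
    · simp
    · exact absurd ((W.smul_mem_iff hc).mp hv) hx
  have hx0 : x ≠ 0 := fun h => hx (h ▸ W.zero_mem)
  have := Submodule.finrank_sup_add_finrank_inf_eq W (Submodule.span F {x})
  rw [hinf, finrank_span_singleton hx0] at this
  simp at this
  omega

lemma exists_hyperplane {F V : Type} [Field F] [AddCommGroup V] [Module F V]
    [FiniteDimensional F V] (W : Submodule F V) {d : ℕ}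
    (hd : Module.finrank F W = d + 1) :
    ∃ (W' : Submodule F V) (x : V), Module.finrank F W' = d ∧ x ∉ W' ∧
      W' ⊔ Submodule.span F {x} = W := by
  let b := Module.finBasisOfFinrankEq F W hd
  set v : Fin (d + 1) → V := fun i => (b i : V) with hv
  have hli : LinearIndependent F v :=
    b.linearIndependent.map' W.subtype (Submodule.ker_subtype W)
  have hlast : Fin.last d ∉ Set.range (Fin.castSucc : Fin d → Fin (d + 1)) := by
    rintro ⟨i, hi⟩
    have := congrArg Fin.val hi
    simp at this
    omega
  refine ⟨Submodule.span F (Set.range (v ∘ Fin.castSucc)), v (Fin.last d), ?_, ?_, ?_⟩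
  · rw [finrank_span_eq_card (hli.comp _ (Fin.castSucc_injective d))]
    simp
  · have h := hli.notMem_span_image (s := Set.range (Fin.castSucc : Fin d → Fin (d+1))) hlast
    rwa [← Set.range_comp] at h
  · rw [← Submodule.span_union]
    have hr : Set.range (v ∘ Fin.castSucc) ∪ {v (Fin.last d)} = Set.range v := by
      ext y
      simp only [Set.mem_union, Set.mem_range, Set.mem_singleton_iff, Function.comp_apply]
      constructor
      · rintro (⟨i, rfl⟩ | rfl)
        · exact ⟨_, rfl⟩
        · exact ⟨_, rfl⟩
      · rintro ⟨i, rfl⟩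
        rcases Fin.eq_castSucc_or_eq_last i with ⟨j, rfl⟩ | rfl
        · exact Or.inl ⟨j, rfl⟩
        · exact Or.inr rfl
    rw [hr]
    have : Set.range v = W.subtype '' Set.range b := by
      rw [← Set.range_comp]; rfl
    rw [this, ← Submodule.map_span, b.span_eq, Submodule.map_top, Submodule.range_subtype]

lemma card_filter_mem {F : Type} [Field F] [Fintype F] {n : ℕ}
    (W : Submodule F (Fin n → F)) :
    (Finset.univ.filter (fun x : Fin n → F => x ∈ W)).card
      = Fintype.card F ^ Module.finrank F W := by
  rw [← Fintype.card_subtype, ← Module.card_eq_pow_finrank (K := F) (V := W)]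

-- numeric inequality
lemma num_ineq (Q k n d : ℕ) (hq : 1 ≤ Q) (hkn : k ≤ n) :
    (Q ^ k - Q ^ d) * (Q ^ n - 1) ≤ (Q ^ k - 1) * (Q ^ n - Q ^ d) := by
  rcases le_or_gt (Q ^ k) (Q ^ d) with h | h
  · rw [Nat.sub_eq_zero_of_le h, Nat.zero_mul]
    exact Nat.zero_le _
  · have hd1 : 1 ≤ Q ^ d := Nat.one_le_pow _ _ hq
    have hk1 : 1 ≤ Q ^ k := Nat.one_le_pow _ _ hq
    have hdn : Q ^ d ≤ Q ^ n := le_trans h.le (Nat.pow_le_pow_right hq hkn)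
    have key : Q ^ k * Q ^ d + Q ^ n ≤ Q ^ k + Q ^ n * Q ^ d := by
      have h2 : Q ^ k * Q ^ d - Q ^ k ≤ Q ^ n * Q ^ d - Q ^ n := by
        rw [← Nat.mul_sub_one, ← Nat.mul_sub_one]
        exact Nat.mul_le_mul_right _ (Nat.pow_le_pow_right hq hkn)
      have h3 : Q ^ k ≤ Q ^ k * Q ^ d := Nat.le_mul_of_pos_right _ hd1
      have h4 : Q ^ n ≤ Q ^ n * Q ^ d := Nat.le_mul_of_pos_right _ hd1
      omega
    have hkn' : Q ^ k ≤ Q ^ n := Nat.pow_le_pow_right hq hkn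
    have h1n : 1 ≤ Q ^ n := Nat.one_le_pow _ _ hq
    zify [h.le, hd1, hk1, hdn, hkn', h1n]
    zify at key
    nlinarith [key]

lemma key_count {F : Type} [Field F] [Fintype F] {n : ℕ} (k : ℕ) (hkn : k ≤ n) :
    ∀ (d : ℕ) (W : Submodule F (Fin n → F)), Module.finrank F W = d →
    (Finset.univ.filter (fun C : Submodule F (Fin n → F) =>
        Module.finrank F C = k ∧ W ≤ C)).card * (Fintype.card F ^ n - 1) ^ d
      ≤ (Finset.univ.filter (fun C : Submodule F (Fin n → F) =>
        Module.finrank F C = k)).card * (Fintype.card F ^ k - 1) ^ d := by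
  intro d
  induction d with
  | zero =>
      intro W _
      simp only [pow_zero, mul_one]
      apply Finset.card_le_card
      intro C hC
      simp only [mem_filter, mem_univ, true_and] at hC ⊢
      exact hC.1
  | succ d ih =>
      intro W hW
      obtain ⟨W', x, hW'd, hxW', hsup⟩ := exists_hyperplane W hW
      set Q := Fintype.card F with hQ
      have hq2 : 2 ≤ Q := Fintype.one_lt_card
      have hq1 : 1 ≤ Q := by omega
      set A := Finset.univ.filter (fun C : Submodule F (Fin n → F) =>
        Module.finrank F C = k ∧ W' ≤ C) with hA
      set NW := (Finset.univ.filter (fun C : Submodule F (Fin n → F) =>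
        Module.finrank F C = k ∧ W ≤ C)).card with hNW
      -- double counting identity
      have hdc : NW * (Q ^ n - Q ^ d) = A.card * (Q ^ k - Q ^ d) := by
        have lhs_eq : ∑ C ∈ A, (Finset.univ.filter
            (fun y : Fin n → F => y ∈ C ∧ y ∉ W')).card = A.card * (Q ^ k - Q ^ d) := by
          have percard : ∀ C ∈ A, (Finset.univ.filter
              (fun y : Fin n → F => y ∈ C ∧ y ∉ W')).card = Q ^ k - Q ^ d := by
            intro C hC
            simp only [hA, mem_filter, mem_univ, true_and] at hC
            have hsub : Finset.univ.filter (fun y : Fin n → F => y ∈ W')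
                ⊆ Finset.univ.filter (fun y : Fin n → F => y ∈ C) := by
              intro y hy
              simp only [mem_filter, mem_univ, true_and] at hy ⊢
              exact hC.2 hy
            have : Finset.univ.filter (fun y : Fin n → F => y ∈ C ∧ y ∉ W')
                = Finset.univ.filter (fun y : Fin n → F => y ∈ C)
                  \ Finset.univ.filter (fun y : Fin n → F => y ∈ W') := by
              ext y; simp [and_comm]
            rw [this, Finset.card_sdiff_of_subset hsub, card_filter_mem, card_filter_mem, hC.1, hW'd]
          rw [Finset.sum_congr rfl percard, Finset.sum_const, smul_eq_mul]
        have swap : ∑ C ∈ A, (Finset.univ.filter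
            (fun y : Fin n → F => y ∈ C ∧ y ∉ W')).card
            = ∑ y ∈ Finset.univ.filter (fun y : Fin n → F => y ∉ W'),
                (A.filter (fun C => y ∈ C)).card := by
          simp only [Finset.card_filter]
          rw [Finset.sum_comm]
          rw [Finset.sum_filter]
          apply Finset.sum_congr rfl
          intro y _
          by_cases hy : y ∉ W' <;> simp [hy]
        have fib : ∀ y : Fin n → F, y ∉ W' →
            (A.filter (fun C => y ∈ C)).card = NW := by
          intro y hy
          have : A.filter (fun C => y ∈ C) = Finset.univ.filter
              (fun C : Submodule F (Fin n → F) =>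
                Module.finrank F C = k ∧ (W' ⊔ Submodule.span F {y}) ≤ C) := by
            ext C
            simp only [hA, Finset.filter_filter, mem_filter, mem_univ, true_and,
              sup_le_iff, Submodule.span_le, Set.singleton_subset_iff, SetLike.mem_coe]
            tauto
          rw [this, hNW]
          apply count_eq
          rw [finrank_sup_span_singleton W' y hy, ← hsup,
            finrank_sup_span_singleton W' x hxW', hW'd]
        have cardcompl : (Finset.univ.filter (fun y : Fin n → F => y ∉ W')).card
            = Q ^ n - Q ^ d := by
          have : Finset.univ.filter (fun y : Fin n → F => y ∉ W')
              = Finset.univ \ Finset.univ.filter (fun y : Fin n → F => y ∈ W') :=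
            (Finset.filter_not _ _)
          rw [this, Finset.card_sdiff_of_subset (Finset.filter_subset _ _), card_filter_mem, hW'd]
          congr 1
          simp [Fintype.card_pi, hQ]
        have rhs_eq : ∑ y ∈ Finset.univ.filter (fun y : Fin n → F => y ∉ W'),
            (A.filter (fun C => y ∈ C)).card = (Q ^ n - Q ^ d) * NW := by
          rw [Finset.sum_congr rfl (fun y hy => fib y (by simpa using hy)),
            Finset.sum_const, smul_eq_mul, cardcompl]
        rw [Nat.mul_comm NW, ← rhs_eq, ← swap, lhs_eq]
      -- now combine
      have hdlt : d < n := by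
        have h1 : Module.finrank F W ≤ n := by
          have := Submodule.finrank_le W
          simpa using this
        omega
      have hpos : 0 < Q ^ n - Q ^ d :=
        Nat.sub_pos_of_lt (Nat.pow_lt_pow_right hq2 hdlt)
      have step : NW * (Q ^ n - 1) ≤ A.card * (Q ^ k - 1) := by
        have h1 : NW * (Q ^ n - 1) * (Q ^ n - Q ^ d)
            ≤ A.card * (Q ^ k - 1) * (Q ^ n - Q ^ d) := by
          calc NW * (Q ^ n - 1) * (Q ^ n - Q ^ d)
              = NW * (Q ^ n - Q ^ d) * (Q ^ n - 1) := by ring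
            _ = A.card * (Q ^ k - Q ^ d) * (Q ^ n - 1) := by rw [hdc]
            _ = A.card * ((Q ^ k - Q ^ d) * (Q ^ n - 1)) := by ring
            _ ≤ A.card * ((Q ^ k - 1) * (Q ^ n - Q ^ d)) :=
                Nat.mul_le_mul_left _ (num_ineq Q k n d hq1 hkn)
            _ = A.card * (Q ^ k - 1) * (Q ^ n - Q ^ d) := by ring
        exact Nat.le_of_mul_le_mul_right h1 hpos
      calc NW * (Q ^ n - 1) ^ (d + 1)
          = NW * (Q ^ n - 1) * (Q ^ n - 1) ^ d := by ring
        _ ≤ A.card * (Q ^ k - 1) * (Q ^ n - 1) ^ d := Nat.mul_le_mul_right _ step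
        _ = (Q ^ k - 1) * (A.card * (Q ^ n - 1) ^ d) := by ring
        _ ≤ (Q ^ k - 1) * ((Finset.univ.filter (fun C : Submodule F (Fin n → F) =>
              Module.finrank F C = k)).card * (Q ^ k - 1) ^ d) :=
            Nat.mul_le_mul_left _ (ih W' hW'd)
        _ = (Finset.univ.filter (fun C : Submodule F (Fin n → F) =>
              Module.finrank F C = k)).card * (Q ^ k - 1) ^ (d + 1) := by ring

lemma exists_finrank_eq {F : Type} [Field F] [Fintype F] {n k : ℕ} (hkn : k ≤ n) :
    ∃ C : Submodule F (Fin n → F), Module.finrank F C = k := by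
  have hli : LinearIndependent F
      (fun i : Fin k => (Pi.basisFun F (Fin n)) (Fin.castLE hkn i)) :=
    (Pi.basisFun F (Fin n)).linearIndependent.comp _ (Fin.castLE_injective hkn)
  exact ⟨Submodule.span F (Set.range _), by rw [finrank_span_eq_card hli]; simp⟩


/-- Extended Averaging Lemma for Linear Codes: the uniform average, over all
`k`-dimensional subspaces `C` of `𝔽_q^n`, of
`∑ ∏_{i=1}^r f(c_i)^{α_i}` over ordered `r`-tuples of pairwise distinct nonzero
codewords of `C`, is bounded by
`∑_{j=0}^{r-1} ((q^k-1)/(q^n-1))^{r-j} ∑_{rank-(r-j) tuples} ∏ f(c_i)^{α_i}`. -/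
theorem extended_averaging_lemma_linear_codes
    (q n k r : ℕ) (hq : IsPrimePow q) (hk : 1 ≤ k) (hkn : k ≤ n) (hr : 1 ≤ r)
    (F : Type) [Field F] [Fintype F] (hF : Fintype.card F = q)
    (α : Fin r → ℝ) (hα : ∀ i, 0 ≤ α i)
    (f : (Fin n → F) → ℝ) (hf : ∀ x, 0 ≤ f x) :
    (1 / ((Finset.univ.filter
        (fun C : Submodule F (Fin n → F) => Module.finrank F C = k)).card : ℝ)) *
      ∑ C ∈ Finset.univ.filter
          (fun C : Submodule F (Fin n → F) => Module.finrank F C = k),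
        ∑ c ∈ Finset.univ.filter
            (fun c : Fin r → (Fin n → F) =>
              Function.Injective c ∧ (∀ i, c i ≠ 0) ∧ ∀ i, c i ∈ C),
          ∏ i, f (c i) ^ (α i)
    ≤ ∑ j ∈ Finset.range r,
        (((q : ℝ) ^ k - 1) / ((q : ℝ) ^ n - 1)) ^ (r - j) *
          ∑ c ∈ Finset.univ.filter
              (fun c : Fin r → (Fin n → F) =>
                Function.Injective c ∧ (∀ i, c i ≠ 0) ∧
                  Module.finrank F (Submodule.span F (Set.range c)) = r - j),
            ∏ i, f (c i) ^ (α i) := by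
  have hq2 : 2 ≤ q := hF ▸ Fintype.one_lt_card
  have hn1 : 1 ≤ n := hk.trans hkn
  set N := (Finset.univ.filter
      (fun C : Submodule F (Fin n → F) => Module.finrank F C = k)).card with hN
  have hN0 : 0 < N := by
    obtain ⟨C₀, hC₀⟩ := exists_finrank_eq (F := F) hkn
    exact Finset.card_pos.mpr ⟨C₀, by simp [hN, hC₀]⟩
  set ρ : ℝ := ((q : ℝ) ^ k - 1) / ((q : ℝ) ^ n - 1) with hρ
  have hq1R : (1 : ℝ) < (q : ℝ) := by exact_mod_cast hq2
  have hqn1 : (1 : ℝ) < (q : ℝ) ^ n := one_lt_pow₀ hq1R (by omega)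
  have hqk1 : (1 : ℝ) ≤ (q : ℝ) ^ k := one_le_pow₀ hq1R.le
  have hρ0 : 0 ≤ ρ := div_nonneg (by linarith) (by linarith)
  -- the key real bound
  have hbound : ∀ (W : Submodule F (Fin n → F)) (d : ℕ), Module.finrank F W = d →
      ((Finset.univ.filter (fun C : Submodule F (Fin n → F) =>
          Module.finrank F C = k ∧ W ≤ C)).card : ℝ) ≤ (N : ℝ) * ρ ^ d := by
    intro W d hWd
    have h := key_count k hkn d W hWd
    rw [hF] at h
    have h1k : 1 ≤ q ^ k := Nat.one_le_pow _ _ (by omega)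
    have h1n : 1 ≤ q ^ n := Nat.one_le_pow _ _ (by omega)
    have hc : ((Finset.univ.filter (fun C : Submodule F (Fin n → F) =>
          Module.finrank F C = k ∧ W ≤ C)).card : ℝ) * (((q ^ n - 1 : ℕ)) : ℝ) ^ d
        ≤ (N : ℝ) * (((q ^ k - 1 : ℕ)) : ℝ) ^ d := by exact_mod_cast h
    rw [Nat.cast_sub h1n, Nat.cast_sub h1k, Nat.cast_pow, Nat.cast_pow, Nat.cast_one] at hc
    have hX : (0 : ℝ) < ((q : ℝ) ^ n - 1) ^ d := pow_pos (by linarith) d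
    rw [hρ, div_pow, ← mul_div_assoc, le_div_iff₀ hX]
    exact hc
  -- rewrite LHS
  set w : (Fin r → (Fin n → F)) → ℝ := fun c => ∏ i, f (c i) ^ (α i) with hw
  have hw0 : ∀ c, 0 ≤ w c := fun c =>
    Finset.prod_nonneg fun i _ => Real.rpow_nonneg (hf _) _
  set P := Finset.univ.filter
    (fun c : Fin r → (Fin n → F) => Function.Injective c ∧ (∀ i, c i ≠ 0)) with hP
  set cnt : (Fin r → (Fin n → F)) → ℕ := fun c =>
    (Finset.univ.filter (fun C : Submodule F (Fin n → F) =>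
      Module.finrank F C = k ∧ Submodule.span F (Set.range c) ≤ C)).card with hcnt
  have lhs_eq : ∑ C ∈ Finset.univ.filter
      (fun C : Submodule F (Fin n → F) => Module.finrank F C = k),
        ∑ c ∈ Finset.univ.filter
            (fun c : Fin r → (Fin n → F) =>
              Function.Injective c ∧ (∀ i, c i ≠ 0) ∧ ∀ i, c i ∈ C),
          w c
      = ∑ c ∈ P, (cnt c : ℝ) * w c := by
    have step1 : ∀ C : Submodule F (Fin n → F),
        Finset.univ.filter (fun c : Fin r → (Fin n → F) =>
          Function.Injective c ∧ (∀ i, c i ≠ 0) ∧ ∀ i, c i ∈ C)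
        = P.filter (fun c => ∀ i, c i ∈ C) := by
      intro C
      rw [hP, Finset.filter_filter]
      apply Finset.filter_congr
      intro c _
      tauto
    calc ∑ C ∈ Finset.univ.filter (fun C : Submodule F (Fin n → F) => Module.finrank F C = k), ∑ c ∈ Finset.univ.filter (fun c : Fin r → (Fin n → F) => Function.Injective c ∧ (∀ i, c i ≠ 0) ∧ ∀ i, c i ∈ C), w c
        = ∑ C ∈ Finset.univ.filter (fun C : Submodule F (Fin n → F) => Module.finrank F C = k), ∑ c ∈ P, if (∀ i, c i ∈ C) then w c else 0 := by
          refine Finset.sum_congr rfl fun C _ => ?_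
          rw [step1 C, Finset.sum_filter]
      _ = ∑ c ∈ P, ∑ C ∈ Finset.univ.filter (fun C : Submodule F (Fin n → F) => Module.finrank F C = k), if (∀ i, c i ∈ C) then w c else 0 := Finset.sum_comm
      _ = ∑ c ∈ P, (cnt c : ℝ) * w c := by
          refine Finset.sum_congr rfl fun c _ => ?_
          have hset : (Finset.univ.filter (fun C : Submodule F (Fin n → F) => Module.finrank F C = k)).filter (fun C => ∀ i, c i ∈ C) = Finset.univ.filter (fun C : Submodule F (Fin n → F) => Module.finrank F C = k ∧ Submodule.span F (Set.range c) ≤ C) := by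
            rw [Finset.filter_filter]
            apply Finset.filter_congr
            intro C _
            simp [Submodule.span_le, Set.range_subset_iff]
          rw [← Finset.sum_filter, hset, Finset.sum_const, nsmul_eq_mul]
  -- rank bounds
  have hrank : ∀ c ∈ P, 1 ≤ Module.finrank F (Submodule.span F (Set.range c)) ∧
      Module.finrank F (Submodule.span F (Set.range c)) ≤ r := by
    intro c hc
    simp only [hP, Finset.mem_filter, Finset.mem_univ, true_and] at hc
    constructor
    · by_contra hlt
      have h0 : Module.finrank F (Submodule.span F (Set.range c)) = 0 := by omega
      have hbot : Submodule.span F (Set.range c) = ⊥ := Submodule.finrank_eq_zero.mp h0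
      have : c ⟨0, hr⟩ ∈ Submodule.span F (Set.range c) :=
        Submodule.subset_span ⟨_, rfl⟩
      rw [hbot, Submodule.mem_bot] at this
      exact hc.2 _ this
    · have h1 := finrank_span_le_card (R := F) (Set.range c)
      rw [Set.toFinset_range] at h1
      exact h1.trans ((Finset.card_image_le).trans (by simp))
  -- fiberwise decomposition
  have hmaps : ∀ c ∈ P, r - Module.finrank F (Submodule.span F (Set.range c))
      ∈ Finset.range r := by
    intro c hc
    have := hrank c hc
    rw [Finset.mem_range]
    omega
  have fib_eq : ∀ j ∈ Finset.range r,
      P.filter (fun c => r - Module.finrank F (Submodule.span F (Set.range c)) = j)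
      = Finset.univ.filter (fun c : Fin r → (Fin n → F) =>
          Function.Injective c ∧ (∀ i, c i ≠ 0) ∧
            Module.finrank F (Submodule.span F (Set.range c)) = r - j) := by
    intro j hj
    rw [Finset.mem_range] at hj
    ext c
    simp only [hP, Finset.filter_filter, Finset.mem_filter, Finset.mem_univ, true_and]
    constructor
    · rintro ⟨⟨h1, h2⟩, h3⟩
      have hb := hrank c (by simp [hP, h1, h2])
      exact ⟨h1, h2, by omega⟩
    · rintro ⟨h1, h2, h3⟩
      exact ⟨⟨h1, h2⟩, by omega⟩
  have decomp : ∑ c ∈ P, (cnt c : ℝ) * w c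
      = ∑ j ∈ Finset.range r, ∑ c ∈ P.filter
          (fun c => r - Module.finrank F (Submodule.span F (Set.range c)) = j),
            (cnt c : ℝ) * w c :=
    (Finset.sum_fiberwise_of_maps_to hmaps _).symm
  rw [lhs_eq, decomp, Finset.mul_sum]
  apply Finset.sum_le_sum
  intro j hj
  rw [Finset.mem_range] at hj
  -- per-fiber bound
  have per : ∀ c ∈ P.filter
      (fun c => r - Module.finrank F (Submodule.span F (Set.range c)) = j),
      (cnt c : ℝ) * w c ≤ (N : ℝ) * ρ ^ (r - j) * w c := by
    intro c hc
    rw [Finset.mem_filter] at hc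
    have hb := hrank c hc.1
    have hd : Module.finrank F (Submodule.span F (Set.range c)) = r - j := by omega
    have := hbound (Submodule.span F (Set.range c)) (r - j) hd
    exact mul_le_mul_of_nonneg_right (le_trans (by rw [hcnt]) this) (hw0 c)
  have hsumle := Finset.sum_le_sum per
  have hNne : ((N : ℝ)) ≠ 0 := by positivity
  calc (1 / (N : ℝ)) * ∑ c ∈ P.filter (fun c => r - Module.finrank F (Submodule.span F (Set.range c)) = j), (cnt c : ℝ) * w c
      ≤ (1 / (N : ℝ)) * ∑ c ∈ P.filter (fun c => r - Module.finrank F (Submodule.span F (Set.range c)) = j), (N : ℝ) * ρ ^ (r - j) * w c := by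
        apply mul_le_mul_of_nonneg_left hsumle
        positivity
    _ = ρ ^ (r - j) * ∑ c ∈ P.filter (fun c => r - Module.finrank F (Submodule.span F (Set.range c)) = j), w c := by
        rw [← Finset.mul_sum, ← mul_assoc, ← mul_assoc]
        congr 1
        field_simp
    _ = ρ ^ (r - j) * ∑ c ∈ Finset.univ.filter (fun c : Fin r → (Fin n → F) => Function.Injective c ∧ (∀ i, c i ≠ 0) ∧ Module.finrank F (Submodule.span F (Set.range c)) = r - j), w c := by
        rw [fib_eq j (Finset.mem_range.mpr hj)]
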